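/- Let K be a field and F ∈ K[x]^{n×n} be nonsingular and column reduced with column degrees d and d_max = max_j d_j ≥ 1; let H be its Hermite normal form with diagonal degrees s = (s_1,…,s_n). For each i set q_i = ⌊s_i/d_max⌋ and r_i = s_i − q_i·d_max; let n̄ = n + Σ_i q_i, let E ∈ K[x]^{n×n̄} be the matrix [Ẽ_1,…,Ẽ_n] where Ẽ_i = [e_i, x^{s_i−q_i·d_max}·e_i, …, x^{s_i−d_max}·e_i] (q_i+1 columns, e_i the i-th standard basis column), and let s* ∈ ℤ^{n̄} be the concatenation over i of the q_i+1 entries (r_i, d_max, …, d_max). Suppose E = F·Q + R with Q, R ∈ K[x]^{n×n̄} and deg R < d_max, and let u* = (2·d_max,…,2·d_max) ∈ ℤ^n. Suppose N ∈ K[x]^{(n+n̄)×n̄} is a [−u*,−s*]-minimal kernel basis of the n×(n+n̄) matrix [F, −R], partitioned as N = [N_u; N_d] with N_d of dimension n̄×n̄, and let N̄ be the submatrix of the columns of N_d whose −s*-column degrees are at most 0. Then H is a column basis of E·N̄, and the nonzero columns of E·N̄ have −s-column degrees equal to 0. -/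

import Mathlib

open Polynomial Matrix

variable {K : Type*} [Field K]

/-- The degree of a polynomial, as an element of `WithBot ℤ` (`⊥` for the zero polynomial). -/
noncomputable def degZ (p : Polynomial K) : WithBot ℤ :=
  p.degree.map fun n : ℕ => (n : ℤ)

/-- The shifted column degree `cdeg_u p = max_i (deg p_i + u_i)` of a vector of polynomials. -/
noncomputable def cdegS {m : Type*} [Fintype m] (u : m → ℤ) (p : m → Polynomial K) : WithBot ℤ :=
  Finset.univ.sup fun i => degZ (p i) + (u i : WithBot ℤ)

/-- The row degree of row `i` of a polynomial matrix. -/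
noncomputable def rdeg {m n : Type*} [Fintype n] (P : Matrix m n (Polynomial K)) (i : m) :
    WithBot ℕ :=
  Finset.univ.sup fun j => (P i j).degree

/-- The shifted leading coefficient matrix `lcoeff (x^u · A · x^{-v})`. -/
noncomputable def lcoeffS {m n : Type*} (u : m → ℤ) (A : Matrix m n (Polynomial K)) (v : n → ℤ) :
    Matrix m n K :=
  Matrix.of fun i j => if 0 ≤ v j - u i then (A i j).coeff (v j - u i).toNat else 0

/-- A matrix over `K` has full column rank if its columns are linearly independent over `K`. -/
def FullColRankK {m n : Type*} (M : Matrix m n K) : Prop :=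
  LinearIndependent K fun j => fun i => M i j

/-- `A` is `u`-column reduced with `u`-column degrees `v`. -/
def IsColReducedWith {m n : Type*} [Fintype m] (u : m → ℤ) (A : Matrix m n (Polynomial K))
    (v : n → ℤ) : Prop :=
  (∀ j, cdegS u (fun i => A i j) = (v j : WithBot ℤ)) ∧ FullColRankK (lcoeffS u A v)

/-- `A` is `u`-column reduced. -/
def IsColReducedS {m n : Type*} [Fintype m] (u : m → ℤ) (A : Matrix m n (Polynomial K)) : Prop :=
  ∃ v : n → ℤ, IsColReducedWith u A v

/-- `F` is column reduced with (ordinary) column degrees `d`. -/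
def IsColReducedNat {m n : Type*} [Fintype m] (F : Matrix m n (Polynomial K)) (d : n → ℕ) : Prop :=
  IsColReducedWith (fun _ => (0 : ℤ)) F (fun j => (d j : ℤ))

/-- `N` is a (right) kernel basis of `F`. -/
def IsKernelBasis {m n k : Type*} [Fintype n] [Fintype k] (F : Matrix m n (Polynomial K))
    (N : Matrix n k (Polynomial K)) : Prop :=
  (LinearIndependent (Polynomial K) fun j => fun i => N i j) ∧
  F * N = 0 ∧
  ∀ q : n → Polynomial K, F.mulVec q = 0 → ∃ p : k → Polynomial K, N.mulVec p = q

/-- `N` is an `s`-minimal kernel basis of `F`. -/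
def IsMinimalKernelBasis {m n k : Type*} [Fintype n] [Fintype k] (F : Matrix m n (Polynomial K))
    (s : n → ℤ) (N : Matrix n k (Polynomial K)) : Prop :=
  IsKernelBasis F N ∧ IsColReducedS s N

/-- `T` is a column basis of `F`. -/
def IsColBasis {m n r : Type*} [Fintype n] [Fintype r] (F : Matrix m n (Polynomial K))
    (T : Matrix m r (Polynomial K)) : Prop :=
  (LinearIndependent (Polynomial K) fun j => fun i => T i j) ∧
  ∀ q : m → Polynomial K, (∃ p, F.mulVec p = q) ↔ (∃ p, T.mulVec p = q)

/-- `H` is in (column) Hermite normal form. -/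
def IsHermiteForm {n : ℕ} (H : Matrix (Fin n) (Fin n) (Polynomial K)) : Prop :=
  (∀ i j : Fin n, i < j → H i j = 0) ∧
  (∀ i : Fin n, (H i i).Monic) ∧
  (∀ i j : Fin n, j < i → (H i j).degree < (H i i).degree)

/-- `H` is the Hermite normal form of `F`. -/
def IsHermiteFormOf {n : ℕ} (F H : Matrix (Fin n) (Fin n) (Polynomial K)) : Prop :=
  IsHermiteForm H ∧ ∃ U : Matrix (Fin n) (Fin n) (Polynomial K), IsUnit U.det ∧ F * U = H

lemma degZ_zero : degZ (0 : Polynomial K) = ⊥ := by simp [degZ]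

lemma degZ_eq_natDegree {p : Polynomial K} (hp : p ≠ 0) : degZ p = ((p.natDegree : ℤ) : WithBot ℤ) := by
  rw [degZ, degree_eq_natDegree hp]; rfl

lemma degZ_le_int_iff {p : Polynomial K} {m : ℤ} :
    degZ p ≤ (m : WithBot ℤ) ↔ ∀ k : ℕ, m < (k : ℤ) → p.coeff k = 0 := by
  by_cases hp : p = 0
  · simp [hp, degZ_zero]
  · rw [degZ_eq_natDegree hp, WithBot.coe_le_coe]
    constructor
    · intro h k hk
      apply coeff_eq_zero_of_natDegree_lt
      exact_mod_cast lt_of_le_of_lt h hk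
    · intro h
      by_contra hlt
      push_neg at hlt
      exact (mt leadingCoeff_eq_zero.mp hp) (h p.natDegree hlt)

lemma degZ_le_int_of_coeff {p : Polynomial K} {m : ℤ}
    (h : ∀ k : ℕ, m < (k : ℤ) → p.coeff k = 0) : degZ p ≤ (m : WithBot ℤ) :=
  degZ_le_int_iff.mpr h

lemma coeff_eq_zero_of_degZ_lt {p : Polynomial K} {k : ℕ} (h : degZ p < ((k : ℤ) : WithBot ℤ)) :
    p.coeff k = 0 := by
  by_cases hp : p = 0
  · simp [hp]
  · rw [degZ_eq_natDegree hp, WithBot.coe_lt_coe] at h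
    exact coeff_eq_zero_of_natDegree_lt (by exact_mod_cast h)

lemma le_degZ_of_coeff_ne {p : Polynomial K} {k : ℕ} (h : p.coeff k ≠ 0) :
    ((k : ℤ) : WithBot ℤ) ≤ degZ p := by
  by_contra hlt
  push_neg at hlt
  exact h (coeff_eq_zero_of_degZ_lt hlt)

lemma degZ_le_degree_coe {p : Polynomial K} {a : ℕ} (h : p.degree ≤ (a : WithBot ℕ)) :
    degZ p ≤ ((a : ℤ) : WithBot ℤ) := by
  refine degZ_le_int_of_coeff fun k hk => ?_
  apply coeff_eq_zero_of_degree_lt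
  refine lt_of_le_of_lt h ?_
  exact_mod_cast (by exact_mod_cast hk : a < k)

lemma cdegS_le_iff {m : Type*} [Fintype m] {u : m → ℤ} {p : m → Polynomial K} {w : WithBot ℤ} :
    cdegS u p ≤ w ↔ ∀ i, degZ (p i) + (u i : WithBot ℤ) ≤ w := by
  simp [cdegS, Finset.sup_le_iff]

lemma le_cdegS {m : Type*} [Fintype m] (u : m → ℤ) (p : m → Polynomial K) (i : m) :
    degZ (p i) + (u i : WithBot ℤ) ≤ cdegS u p :=
  Finset.le_sup (f := fun i => degZ (p i) + (u i : WithBot ℤ)) (Finset.mem_univ i)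

lemma degZ_add_int_le_iff {p : Polynomial K} {u w : ℤ} :
    degZ p + (u : WithBot ℤ) ≤ (w : WithBot ℤ) ↔ degZ p ≤ ((w - u : ℤ) : WithBot ℤ) := by
  by_cases hp : p = 0
  · simp [hp, degZ_zero]
  · rw [degZ_eq_natDegree hp, ← WithBot.coe_add, WithBot.coe_le_coe, WithBot.coe_le_coe]
    omega

-- full col rank implies mulVec of nonzero vector is nonzero
lemma mulVec_ne_zero_of_fullColRank {m n : Type*} [Fintype m] [Fintype n]
    {M : Matrix m n K} (hM : FullColRankK M) {ζ : n → K} (hζ : ζ ≠ 0) :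
    M.mulVec ζ ≠ 0 := by
  intro h0
  apply hζ
  funext c
  refine Fintype.linearIndependent_iff.mp hM ζ ?_ c
  funext i
  have := congrFun h0 i
  simpa [Matrix.mulVec, dotProduct, Finset.sum_apply, mul_comm, smul_eq_mul] using this

lemma degZ_natDegree_le {p : Polynomial K} {b : ℤ} (hb : 0 ≤ b)
    (h : degZ p ≤ (b : WithBot ℤ)) : p.natDegree ≤ b.toNat := by
  by_cases hp : p = 0
  · simp [hp]
  · rw [degZ_eq_natDegree hp, WithBot.coe_le_coe] at h
    omega

lemma mulVec_applyP {m k : Type*} [Fintype k] (M : Matrix m k (Polynomial K)) (z : k → Polynomial K)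
    (i : m) : (M.mulVec z) i = ∑ c, M i c * z c := rfl

lemma mulVec_applyK {m k : Type*} [Fintype k] (M : Matrix m k K) (z : k → K)
    (i : m) : (M.mulVec z) i = ∑ c, M i c * z c := rfl

lemma lcoeffS_apply {m k : Type*} (u : m → ℤ) (A : Matrix m k (Polynomial K)) (v : k → ℤ)
    (i : m) (c : k) :
    lcoeffS u A v i c = if 0 ≤ v c - u i then (A i c).coeff (v c - u i).toNat else 0 := rfl

/-- Predictable degree property. -/
lemma pdp {m k : Type*} [Fintype m] [Fintype k] {u : m → ℤ} {A : Matrix m k (Polynomial K)}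
    {v : k → ℤ} (hv : ∀ j, cdegS u (fun i => A i j) = ((v j : ℤ) : WithBot ℤ))
    (hrank : FullColRankK (lcoeffS u A v))
    (z : k → Polynomial K) (j : k) (hz : z j ≠ 0) :
    (((z j).natDegree + v j : ℤ) : WithBot ℤ) ≤ cdegS u (A.mulVec z) := by
  classical
  -- the maximum shifted degree D
  set S : Finset k := Finset.univ.filter (fun c => z c ≠ 0) with hS
  have hjS : j ∈ S := by rw [hS]; exact Finset.mem_filter.mpr ⟨Finset.mem_univ j, hz⟩
  have hSne : S.Nonempty := ⟨j, hjS⟩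
  set D : ℤ := S.sup' hSne (fun c => ((z c).natDegree : ℤ) + v c) with hD
  have hjD : ((z j).natDegree : ℤ) + v j ≤ D :=
    Finset.le_sup' (fun c => ((z c).natDegree : ℤ) + v c) hjS
  have hcD : ∀ c, z c ≠ 0 → ((z c).natDegree : ℤ) + v c ≤ D :=
    fun c hc => Finset.le_sup' (fun c => ((z c).natDegree : ℤ) + v c)
      (by rw [hS]; exact Finset.mem_filter.mpr ⟨Finset.mem_univ c, hc⟩)
  obtain ⟨c0, hc0S, hc0⟩ := Finset.exists_mem_eq_sup' hSne (fun c => ((z c).natDegree : ℤ) + v c)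
  have hc0ne : z c0 ≠ 0 := (Finset.mem_filter.mp hc0S).2
  -- the leading coefficient vector
  set ζ : k → K := fun c => if z c ≠ 0 ∧ ((z c).natDegree : ℤ) + v c = D then
      (z c).leadingCoeff else 0 with hζdef
  have hζ : ζ ≠ 0 := by
    intro h0
    have h1 := congrFun h0 c0
    simp only [hζdef, Pi.zero_apply] at h1
    rw [if_pos ⟨hc0ne, by rw [hD]; exact hc0.symm⟩] at h1
    exact hc0ne (leadingCoeff_eq_zero.mp h1)
  -- entrywise bound on A
  have hAbound : ∀ i c, degZ (A i c) ≤ ((v c - u i : ℤ) : WithBot ℤ) := by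
    intro i c
    have h1 := le_cdegS u (fun i => A i c) i
    rw [hv c] at h1
    by_cases hA : A i c = 0
    · simp [hA, degZ]
    · rw [degZ_eq_natDegree hA] at h1 ⊢
      rw [← WithBot.coe_add, WithBot.coe_le_coe] at h1
      rw [WithBot.coe_le_coe]; omega
  -- key coefficient computation
  have key : ∀ i, (if 0 ≤ D - u i then ((A.mulVec z) i).coeff (D - u i).toNat else 0)
      = ((lcoeffS u A v).mulVec ζ) i := by
    intro i
    by_cases hi : 0 ≤ D - u i
    · rw [if_pos hi]
      rw [mulVec_applyP, mulVec_applyK, Polynomial.finset_sum_coeff]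
      refine Finset.sum_congr rfl fun c _ => ?_
      by_cases hzc : z c = 0
      · simp [hzc, hζdef]
      · by_cases htop : ((z c).natDegree : ℤ) + v c = D
        · -- top term
          by_cases hvc : 0 ≤ v c - u i
          · have hbA : (A i c).natDegree ≤ (v c - u i).toNat :=
              degZ_natDegree_le hvc (hAbound i c)
            have hsplit : (D - u i).toNat = (v c - u i).toNat + (z c).natDegree := by omega
            rw [hsplit, coeff_mul_add_eq_of_natDegree_le hbA le_rfl]
            rw [lcoeffS_apply, if_pos hvc]
            simp only [hζdef]
            rw [if_pos ⟨hzc, htop⟩]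
            rfl
          · -- A i c must be zero
            have hA0 : A i c = 0 := by
              by_contra hA
              have := hAbound i c
              rw [degZ_eq_natDegree hA, WithBot.coe_le_coe] at this
              omega
            rw [lcoeffS_apply, if_neg hvc]
            simp [hA0]
        · -- non-top term: product degree too small
          have hlt : ((z c).natDegree : ℤ) + v c < D := lt_of_le_of_ne (hcD c hzc) htop
          have hrhs : (lcoeffS u A v) i c * ζ c = 0 := by
            rw [hζdef]; simp [hzc, htop]
          rw [hrhs]
          by_cases hA : A i c = 0
          · simp [hA]
          · have hdA : (A i c).natDegree ≤ v c - u i := by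
              have := hAbound i c
              rw [degZ_eq_natDegree hA, WithBot.coe_le_coe] at this
              exact this
            apply coeff_eq_zero_of_natDegree_lt
            have hmul : ((A i c * z c).natDegree : ℤ) ≤ ((A i c).natDegree : ℤ) + (z c).natDegree := by
              exact_mod_cast natDegree_mul_le (p := A i c) (q := z c)
            omega
    · rw [if_neg hi, mulVec_applyK]
      symm
      refine Finset.sum_eq_zero fun c _ => ?_
      by_cases hzζ : ζ c = 0
      · simp [hzζ]
      · have hcond : z c ≠ 0 ∧ ((z c).natDegree : ℤ) + v c = D := by
          by_contra hc
          exact hzζ (by rw [hζdef]; simp only [hc, if_false])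
        have hvi : ¬ (0 ≤ v c - u i) := by
          have : (0:ℤ) ≤ (z c).natDegree := Int.natCast_nonneg _
          omega
        rw [lcoeffS_apply, if_neg hvi, zero_mul]
  -- conclude
  obtain ⟨i, hi⟩ := Function.ne_iff.mp
    (mulVec_ne_zero_of_fullColRank hrank hζ)
  have hkey := key i
  by_cases hDi : 0 ≤ D - u i
  · rw [if_pos hDi] at hkey
    have hco : ((A.mulVec z) i).coeff (D - u i).toNat ≠ 0 := by
      rw [hkey]; exact hi
    have h1 : (((D - u i : ℤ)) : WithBot ℤ) ≤ degZ ((A.mulVec z) i) := by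
      have := le_degZ_of_coeff_ne hco
      rwa [Int.toNat_of_nonneg hDi] at this
    have h2 : ((D : ℤ) : WithBot ℤ) ≤ degZ ((A.mulVec z) i) + (u i : WithBot ℤ) := by
      calc ((D : ℤ) : WithBot ℤ) = (((D - u i : ℤ)) : WithBot ℤ) + (u i : WithBot ℤ) := by
            rw [← WithBot.coe_add]; norm_num
        _ ≤ degZ ((A.mulVec z) i) + (u i : WithBot ℤ) := add_le_add_left h1 _
    calc (((z j).natDegree + v j : ℤ) : WithBot ℤ) ≤ ((D : ℤ) : WithBot ℤ) := by
          exact_mod_cast hjD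
      _ ≤ degZ ((A.mulVec z) i) + (u i : WithBot ℤ) := h2
      _ ≤ cdegS u (A.mulVec z) := le_cdegS u _ i
  · rw [if_neg hDi] at hkey
    exact absurd hkey.symm (by simpa using hi)

/-- truncation of g below degree e -/
noncomputable def truncT (g : Polynomial K) (e : ℕ) : Polynomial K :=
  ∑ t ∈ Finset.range e, monomial t (g.coeff t)

lemma truncT_coeff (g : Polynomial K) (e N : ℕ) :
    (truncT g e).coeff N = if N < e then g.coeff N else 0 := by
  rw [truncT, finset_sum_coeff]
  simp only [coeff_monomial]
  rw [Finset.sum_ite_eq' (Finset.range e) N (fun t => g.coeff t)]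
  simp [Finset.mem_range]

/-- slice width -/
def Wd (dmax qi k : ℕ) : ℕ := if k + 1 = qi then dmax + 1 else dmax

/-- slice of g starting at ri + k * dmax -/
noncomputable def slD (dmax ri qi : ℕ) (g : Polynomial K) (k : ℕ) : Polynomial K :=
  ∑ t ∈ Finset.range (Wd dmax qi k), monomial t (g.coeff (ri + k * dmax + t))

/-- endpoints -/
def Ept (dmax ri si qi k : ℕ) : ℕ := if k = qi then si + 1 else ri + k * dmax

lemma slD_coeff (dmax ri qi : ℕ) (g : Polynomial K) (k N : ℕ) :
    (slD dmax ri qi g k).coeff N =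
      if N < Wd dmax qi k then g.coeff (ri + k * dmax + N) else 0 := by
  rw [slD, finset_sum_coeff]
  simp only [coeff_monomial]
  rw [Finset.sum_ite_eq' (Finset.range (Wd dmax qi k)) N]
  simp [Finset.mem_range]

lemma Wd_le (dmax qi k : ℕ) : Wd dmax qi k ≤ dmax + 1 := by
  rw [Wd]; split <;> omega

section Decomp
variable {n : ℕ}

lemma claimA (dmax ri si qi : ℕ) (g : Polynomial K)
    (hsum : ri + qi * dmax = si) (k : ℕ) (hk : k < qi) :
    slD dmax ri qi g k * X ^ (ri + k * dmax)
      = truncT g (Ept dmax ri si qi (k + 1)) - truncT g (Ept dmax ri si qi k) := by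
  have hEk : Ept dmax ri si qi k = ri + k * dmax := if_neg (by omega)
  have hstep : Ept dmax ri si qi (k + 1) = (ri + k * dmax) + Wd dmax qi k := by
    rw [Ept, Wd]
    by_cases hq : k + 1 = qi
    · rw [if_pos hq, if_pos hq]
      have h2 : si = ri + (k + 1) * dmax := by rw [← hsum, ← hq]
      rw [h2, Nat.succ_mul]
      omega
    · rw [if_neg hq, if_neg hq, Nat.succ_mul]
      omega
  ext N
  rw [coeff_mul_X_pow', Polynomial.coeff_sub, truncT_coeff, truncT_coeff, hEk, hstep]
  by_cases h1 : ri + k * dmax ≤ N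
  · rw [if_pos h1, slD_coeff]
    have he : ri + k * dmax + (N - (ri + k * dmax)) = N := by omega
    by_cases h2 : N - (ri + k * dmax) < Wd dmax qi k
    · rw [if_pos h2, if_pos (by omega), if_neg (by omega), he, sub_zero]
    · rw [if_neg h2, if_neg (by omega)]
      by_cases h3 : N < ri + k * dmax
      · omega
      · rw [if_neg h3, sub_zero]
  · rw [if_neg h1, if_pos (by omega), if_pos (by omega), sub_self]

/-- A decomposition of a vector `g` of polynomials with `deg g_i ≤ s_i` along the columns of `E`. -/
lemma decomp_exists (dmax : ℕ) (s r q : Fin n → ℕ)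
    (hsum : ∀ i, r i + q i * dmax = s i)
    (g : Fin n → Polynomial K)
    (hg : ∀ i N, s i < N → (g i).coeff N = 0) :
    ∃ P : ((i : Fin n) × Fin (q i + 1)) → Polynomial K,
      (∀ i N, r i < N → (P ⟨i, 0⟩).coeff N = 0) ∧
      (∀ (i : Fin n) (k : Fin (q i)) (N : ℕ), dmax < N → (P ⟨i, k.succ⟩).coeff N = 0) ∧
      (∀ a, P ⟨a, 0⟩ + ∑ k : Fin (q a), P ⟨a, k.succ⟩ * X ^ (r a + (k : ℕ) * dmax) = g a) := by
  classical
  set tail : Fin n → Polynomial K := fun i =>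
    ∑ k : Fin (q i), slD dmax (r i) (q i) (g i) (k : ℕ) * X ^ (r i + (k : ℕ) * dmax) with htail
  have htail_eq : ∀ i, tail i = truncT (g i) (Ept dmax (r i) (s i) (q i) (q i))
      - truncT (g i) (Ept dmax (r i) (s i) (q i) 0) := by
    intro i
    simp only [htail]
    rw [Fin.sum_univ_eq_sum_range
      (fun k => slD dmax (r i) (q i) (g i) k * X ^ (r i + k * dmax))]
    rw [Finset.sum_congr rfl
      (fun k hk => claimA dmax (r i) (s i) (q i) (g i) (hsum i) k (Finset.mem_range.mp hk))]
    exact Finset.sum_range_sub (fun k => truncT (g i) (Ept dmax (r i) (s i) (q i) k)) (q i)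
  have htrunc_top : ∀ i, truncT (g i) (s i + 1) = g i := by
    intro i
    ext N
    rw [truncT_coeff]
    by_cases h : N < s i + 1
    · rw [if_pos h]
    · rw [if_neg h, hg i N (by omega)]
  set P : ((i : Fin n) × Fin (q i + 1)) → Polynomial K := fun c =>
    if (c.2 : ℕ) = 0 then g c.1 - tail c.1 else slD dmax (r c.1) (q c.1) (g c.1) ((c.2 : ℕ) - 1)
    with hP
  have hP0 : ∀ i, P ⟨i, 0⟩ = g i - tail i := by
    intro i; simp [hP]
  have hPk : ∀ (i : Fin n) (k : Fin (q i)),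
      P ⟨i, k.succ⟩ = slD dmax (r i) (q i) (g i) (k : ℕ) := by
    intro i k
    simp only [hP, Fin.val_succ]
    rw [if_neg (Nat.succ_ne_zero _)]
    simp
  refine ⟨P, ?_, ?_, ?_⟩
  · intro i N hN
    rw [hP0 i, Polynomial.coeff_sub, htail_eq i]
    by_cases hq0 : q i = 0
    · have hEeq : Ept dmax (r i) (s i) (q i) (q i) = Ept dmax (r i) (s i) (q i) 0 := by
        rw [hq0]
      rw [hEeq, sub_self]
      have hrs : r i = s i := by have := hsum i; rw [hq0] at this; simpa using this
      rw [Polynomial.coeff_zero, sub_zero, hg i N (by omega)]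
    · have hE0 : Ept dmax (r i) (s i) (q i) 0 = r i := by
        rw [Ept, if_neg (by omega)]; omega
      have hEq : Ept dmax (r i) (s i) (q i) (q i) = s i + 1 := if_pos rfl
      rw [hE0, hEq, htrunc_top i, Polynomial.coeff_sub, truncT_coeff, if_neg (by omega)]
      ring
  · intro i k N hN
    rw [hPk i k, slD_coeff, if_neg (by have := Wd_le dmax (q i) (k : ℕ); omega)]
  · intro a
    rw [hP0 a]
    have hsum2 : ∑ k : Fin (q a), P ⟨a, k.succ⟩ * X ^ (r a + (k : ℕ) * dmax) = tail a := by
      rw [htail]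
      exact Finset.sum_congr rfl fun k _ => by rw [hPk a k]
    rw [hsum2, sub_add_cancel]

end Decomp

lemma degZ_le_nat_iff {p : Polynomial K} {a : ℕ} :
    degZ p ≤ ((a : ℤ) : WithBot ℤ) ↔ ∀ N : ℕ, a < N → p.coeff N = 0 := by
  rw [degZ_le_int_iff]
  constructor
  · intro h N hN; exact h N (by exact_mod_cast hN)
  · intro h N hN; exact h N (by exact_mod_cast hN)

lemma shift_le_zero_iff {p : Polynomial K} {a : ℕ} :
    degZ p + ((-(a : ℤ) : ℤ) : WithBot ℤ) ≤ (0 : WithBot ℤ) ↔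
      ∀ N : ℕ, a < N → p.coeff N = 0 := by
  by_cases hp : p = 0
  · simp [hp, degZ]
  · rw [degZ_eq_natDegree hp, ← WithBot.coe_add]
    rw [show ((0 : WithBot ℤ)) = (((0 : ℤ)) : WithBot ℤ) from rfl, WithBot.coe_le_coe]
    rw [← degZ_le_nat_iff (p := p) (a := a), degZ_eq_natDegree hp, WithBot.coe_le_coe]
    omega

lemma linearIndependent_cols_of_det_ne_zero {n : ℕ} {H : Matrix (Fin n) (Fin n) (Polynomial K)}
    (h : H.det ≠ 0) : LinearIndependent (Polynomial K) fun j => fun i => H i j := by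
  rw [Fintype.linearIndependent_iff]
  intro g hg
  have hmv : H.mulVec g = 0 := by
    funext i
    have := congrFun hg i
    simpa [Matrix.mulVec, dotProduct, Finset.sum_apply, mul_comm, smul_eq_mul] using this
  have h2 : H.det • g = 0 := by
    have h3 := congrArg (fun w => (adjugate H).mulVec w) hmv
    simpa [Matrix.mulVec_mulVec, Matrix.adjugate_mul, Matrix.smul_mulVec,
      Matrix.one_mulVec, Matrix.mulVec_zero] using h3
  intro i
  have := congrFun h2 i
  simp only [Pi.smul_apply, smul_eq_mul, Pi.zero_apply] at this
  rcases mul_eq_zero.mp this with h4 | h4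
  · exact absurd h4 h
  · exact h4

lemma colspace_iff_of_unimodular {n : ℕ} {F H U : Matrix (Fin n) (Fin n) (Polynomial K)}
    (hU : IsUnit U.det) (hFU : F * U = H) (v : Fin n → Polynomial K) :
    (∃ p, F.mulVec p = v) ↔ (∃ p, H.mulVec p = v) := by
  constructor
  · rintro ⟨p, rfl⟩
    refine ⟨U⁻¹.mulVec p, ?_⟩
    rw [Matrix.mulVec_mulVec, ← hFU, Matrix.mul_nonsing_inv_cancel_right _ _ hU]
  · rintro ⟨p, rfl⟩
    exact ⟨U.mulVec p, by rw [Matrix.mulVec_mulVec, hFU]⟩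

lemma cdeg_lower_of_hermite {n : ℕ} {H : Matrix (Fin n) (Fin n) (Polynomial K)}
    (hlow : ∀ i j : Fin n, i < j → H i j = 0) (hmon : ∀ i : Fin n, (H i i).Monic)
    {s : Fin n → ℕ} (hs : ∀ i, s i = (H i i).natDegree)
    (w : Fin n → Polynomial K) (hw : H.mulVec w ≠ 0) :
    (0 : WithBot ℤ) ≤ cdegS (fun i : Fin n => -(s i : ℤ)) (H.mulVec w) := by
  classical
  have hwne : w ≠ 0 := by
    rintro rfl
    exact hw (Matrix.mulVec_zero H)
  set T : Finset (Fin n) := Finset.univ.filter (fun i => w i ≠ 0) with hT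
  have hTne : T.Nonempty := by
    obtain ⟨i, hi⟩ := Function.ne_iff.mp hwne
    exact ⟨i, Finset.mem_filter.mpr ⟨Finset.mem_univ i, hi⟩⟩
  set j := T.min' hTne with hj
  have hjT : j ∈ T := T.min'_mem hTne
  have hwj : w j ≠ 0 := (Finset.mem_filter.mp hjT).2
  have hentry : (H.mulVec w) j = H j j * w j := by
    rw [mulVec_applyP]
    refine Finset.sum_eq_single j (fun k _ hk => ?_) (fun h => absurd (Finset.mem_univ j) h)
    rcases lt_or_gt_of_ne hk with hlt | hgt
    · -- k < j : w k = 0 by minimality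
      have hknotT : k ∉ T := fun hkT => absurd (T.min'_le k hkT) (by omega)
      have : w k = 0 := by
        by_contra hne
        exact hknotT (Finset.mem_filter.mpr ⟨Finset.mem_univ k, hne⟩)
      rw [this, mul_zero]
    · rw [hlow j k hgt, zero_mul]
  have hne : (H.mulVec w) j ≠ 0 := by
    rw [hentry]
    exact mul_ne_zero (hmon j).ne_zero hwj
  have hdeg : ((H.mulVec w) j).natDegree = s j + (w j).natDegree := by
    rw [hentry, natDegree_mul (hmon j).ne_zero hwj, hs j]
  refine le_trans ?_ (le_cdegS _ _ j)
  rw [degZ_eq_natDegree hne, hdeg, ← WithBot.coe_add]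
  rw [show ((0 : WithBot ℤ)) = (((0 : ℤ)) : WithBot ℤ) from rfl, WithBot.coe_le_coe]
  omega

section EE
variable {n : ℕ} {dmax : ℕ} {q r : Fin n → ℕ}
  {E : Matrix (Fin n) ((i : Fin n) × Fin (q i + 1)) (Polynomial K)}

lemma E_mulVec_entry
    (hE : ∀ (a : Fin n) (c : (i : Fin n) × Fin (q i + 1)),
      E a c = if a = c.1 then
          (if c.2 = (0 : Fin (q c.1 + 1)) then 1
            else Polynomial.X ^ (r c.1 + ((c.2 : ℕ) - 1) * dmax))
        else 0)
    (p : ((i : Fin n) × Fin (q i + 1)) → Polynomial K) (a : Fin n) :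
    (E.mulVec p) a = p ⟨a, 0⟩ + ∑ k : Fin (q a), p ⟨a, k.succ⟩ * X ^ (r a + (k : ℕ) * dmax) := by
  rw [mulVec_applyP, ← Finset.univ_sigma_univ, Finset.sum_sigma]
  rw [Finset.sum_eq_single a (fun i _ hi => ?_) (fun h => absurd (Finset.mem_univ a) h)]
  · rw [Fin.sum_univ_succ]
    congr 1
    · rw [hE a ⟨a, 0⟩, if_pos rfl, if_pos rfl, one_mul]
    · refine Finset.sum_congr rfl fun k _ => ?_
      rw [hE a ⟨a, k.succ⟩, if_pos rfl, if_neg (Fin.succ_ne_zero k)]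
      rw [Fin.val_succ, Nat.add_sub_cancel, mul_comm]
  · refine Finset.sum_eq_zero fun k _ => ?_
    rw [hE a ⟨i, k⟩, if_neg (by exact fun h => hi h.symm), zero_mul]

lemma E_mulVec_coeff_bound {s : Fin n → ℕ}
    (hE : ∀ (a : Fin n) (c : (i : Fin n) × Fin (q i + 1)),
      E a c = if a = c.1 then
          (if c.2 = (0 : Fin (q c.1 + 1)) then 1
            else Polynomial.X ^ (r c.1 + ((c.2 : ℕ) - 1) * dmax))
        else 0)
    (hsum : ∀ i, r i + q i * dmax = s i)
    (p : ((i : Fin n) × Fin (q i + 1)) → Polynomial K)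
    (hp0 : ∀ i N, r i < N → (p ⟨i, 0⟩).coeff N = 0)
    (hpk : ∀ (i : Fin n) (k : Fin (q i)) (N : ℕ), dmax < N → (p ⟨i, k.succ⟩).coeff N = 0)
    (a : Fin n) (N : ℕ) (hN : s a < N) : ((E.mulVec p) a).coeff N = 0 := by
  rw [E_mulVec_entry hE, Polynomial.coeff_add, finset_sum_coeff]
  have hra : r a ≤ s a := by have := hsum a; omega
  rw [hp0 a N (by omega), zero_add]
  refine Finset.sum_eq_zero fun k _ => ?_
  rw [coeff_mul_X_pow']
  by_cases hle : r a + (k : ℕ) * dmax ≤ N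
  · rw [if_pos hle]
    have hmul : ((k : ℕ) + 1) * dmax = (k : ℕ) * dmax + dmax := Nat.succ_mul _ _
    have hlt : ((k : ℕ) + 1) * dmax ≤ q a * dmax :=
      Nat.mul_le_mul_right dmax k.is_lt
    have := hsum a
    exact hpk a k _ (by omega)
  · rw [if_neg hle]
end EE

attribute [local instance] Classical.propDecidable

/-- Lemma 4: with `E = F·Q + R`, `deg R < d_max`, and
`u* = (2·d_max,…,2·d_max)`, if `N = [N_u; N_d]` is a `[-u*,-s*]`-minimal kernel basis of
`[F, -R]` and `N̄` consists of the columns of `N_d` of `-s*`-column degree at most `0`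
(here: the other columns are zeroed out), then the Hermite normal form `H` of `F` is a column
basis of `E·N̄`, and the nonzero columns of `E·N̄` have `-s`-column degree `0`. -/
theorem hermite_from_remainder_kernel_basis {n : ℕ}
    (F H : Matrix (Fin n) (Fin n) (Polynomial K)) (d : Fin n → ℕ)
    (hFns : F.det ≠ 0) (hFcr : IsColReducedNat F d)
    (hH : IsHermiteFormOf F H)
    (dmax : ℕ) (hdmax : dmax = Finset.univ.sup d) (hd1 : 1 ≤ dmax)
    (s : Fin n → ℕ) (hs : ∀ i, s i = (H i i).natDegree)
    (q r : Fin n → ℕ) (hq : ∀ i, q i = s i / dmax) (hr : ∀ i, r i = s i % dmax)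
    (E : Matrix (Fin n) ((i : Fin n) × Fin (q i + 1)) (Polynomial K))
    (hE : ∀ (a : Fin n) (c : (i : Fin n) × Fin (q i + 1)),
      E a c = if a = c.1 then
          (if c.2 = (0 : Fin (q c.1 + 1)) then 1
            else Polynomial.X ^ (r c.1 + ((c.2 : ℕ) - 1) * dmax))
        else 0)
    (sstar : ((i : Fin n) × Fin (q i + 1)) → ℤ)
    (hsstar : ∀ c, sstar c =
      if c.2 = (0 : Fin (q c.1 + 1)) then (r c.1 : ℤ) else (dmax : ℤ))
    (Q R : Matrix (Fin n) ((i : Fin n) × Fin (q i + 1)) (Polynomial K))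
    (hQR : E = F * Q + R)
    (hRdeg : ∀ a c, (R a c).degree < (dmax : WithBot ℕ))
    (Nu : Matrix (Fin n) ((i : Fin n) × Fin (q i + 1)) (Polynomial K))
    (Nd : Matrix ((i : Fin n) × Fin (q i + 1)) ((i : Fin n) × Fin (q i + 1)) (Polynomial K))
    (hN : IsMinimalKernelBasis (fromCols F (-R))
      (Sum.elim (fun _ : Fin n => -(2 * dmax : ℤ)) (fun c => -(sstar c)))
      (fromRows Nu Nd))
    (Nbar : Matrix ((i : Fin n) × Fin (q i + 1)) ((i : Fin n) × Fin (q i + 1)) (Polynomial K))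
    (hNbar : ∀ a c, Nbar a c =
      if cdegS (fun b => -(sstar b)) (fun b => Nd b c) ≤ (0 : WithBot ℤ) then Nd a c else 0) :
    IsColBasis (E * Nbar) H ∧
    ∀ c, (∃ a, (E * Nbar) a c ≠ 0) →
      cdegS (fun i : Fin n => -(s i : ℤ)) (fun a => (E * Nbar) a c) = (0 : WithBot ℤ) := by
  classical
  obtain ⟨⟨hNli, hNker, hNgen⟩, vN, hvN, hrkN⟩ := hN
  obtain ⟨⟨hHlow, hHmon, hHdeg⟩, U, hUdet, hFU⟩ := hH
  obtain ⟨hFdeg, hFrank⟩ := hFcr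
  -- basic arithmetic facts
  have hsumrq : ∀ i, r i + q i * dmax = s i := by
    intro i; rw [hr, hq]; exact Nat.mod_add_div' (s i) dmax
  have hrlt : ∀ i, r i < dmax := fun i => by rw [hr]; exact Nat.mod_lt _ (by omega)
  have hdetH : H.det ≠ 0 := by
    rw [← hFU, Matrix.det_mul]
    exact mul_ne_zero hFns hUdet.ne_zero
  -- kernel equation F Nu = R Nd
  have hFNu : F * Nu = R * Nd := by
    have h0 := hNker
    rw [fromCols_mul_fromRows, Matrix.neg_mul] at h0
    have := add_eq_zero_iff_eq_neg.mp h0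
    rwa [neg_neg] at this
  -- set M
  set M : Matrix (Fin n) ((i : Fin n) × Fin (q i + 1)) (Polynomial K) :=
    Q * Nd + Nu with hM
  have hEM : E * Nd = F * M := by
    rw [hQR, hM, Matrix.add_mul, Matrix.mul_add, ← Matrix.mul_assoc, hFNu]
  -- the selection predicate
  set sel : ((i : Fin n) × Fin (q i + 1)) → Prop :=
    fun c => cdegS (fun b => -(sstar b)) (fun b => Nd b c) ≤ (0 : WithBot ℤ) with hseldef
  set Mbar : Matrix (Fin n) ((i : Fin n) × Fin (q i + 1)) (Polynomial K) :=
    Matrix.of (fun a c => if sel c then M a c else 0) with hMbar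
  have hENbar : E * Nbar = F * Mbar := by
    refine Matrix.ext fun a c => ?_
    rw [Matrix.mul_apply, Matrix.mul_apply]
    by_cases hc : sel c
    · have h1 : ∀ b, Nbar b c = Nd b c := fun b => by rw [hNbar b c, if_pos hc]
      have h2 : ∀ b, Mbar b c = M b c := fun b => by rw [hMbar, Matrix.of_apply, if_pos hc]
      calc ∑ b, E a b * Nbar b c = ∑ b, E a b * Nd b c :=
            Finset.sum_congr rfl fun b _ => by rw [h1 b]
        _ = (E * Nd) a c := (Matrix.mul_apply).symm
        _ = (F * M) a c := by rw [hEM]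
        _ = ∑ b, F a b * Mbar b c := by
            rw [Matrix.mul_apply]
            exact Finset.sum_congr rfl fun b _ => by rw [h2 b]
    · have h1 : ∀ b, Nbar b c = 0 := fun b => by rw [hNbar b c, if_neg hc]
      have h2 : ∀ b, Mbar b c = 0 := fun b => by rw [hMbar, Matrix.of_apply, if_neg hc]
      rw [Finset.sum_eq_zero fun b _ => by rw [h1 b, mul_zero],
        Finset.sum_eq_zero fun b _ => by rw [h2 b, mul_zero]]
  -- unpacking selection into coefficient bounds
  have hsel_coeff : ∀ c, sel c →
      (∀ i N, r i < N → (Nd ⟨i, 0⟩ c).coeff N = 0) ∧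
      (∀ (i : Fin n) (k : Fin (q i)) (N : ℕ), dmax < N → (Nd ⟨i, k.succ⟩ c).coeff N = 0) := by
    intro c hc
    rw [hseldef] at hc
    rw [cdegS_le_iff] at hc
    constructor
    · intro i N hN
      have h1 := hc ⟨i, 0⟩
      rw [hsstar ⟨i, 0⟩, if_pos rfl] at h1
      exact (shift_le_zero_iff.mp h1) N hN
    · intro i k N hN
      have h1 := hc ⟨i, k.succ⟩
      rw [hsstar ⟨i, k.succ⟩, if_neg (Fin.succ_ne_zero k)] at h1
      exact (shift_le_zero_iff.mp h1) N hN
  -- direction 1 : column space of E Nbar ⊆ column space of H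
  have dir1 : ∀ v : Fin n → Polynomial K,
      (∃ p, (E * Nbar).mulVec p = v) → ∃ p, H.mulVec p = v := by
    rintro v ⟨p, rfl⟩
    rw [hENbar, ← Matrix.mulVec_mulVec]
    exact (colspace_iff_of_unimodular hUdet hFU _).mp ⟨_, rfl⟩
  -- direction 2 : each column of H is generated
  have hper : ∀ j : Fin n, ∃ z : ((i : Fin n) × Fin (q i + 1)) → Polynomial K,
      (E * Nbar).mulVec z = fun a => H a j := by
    intro j
    have hgj : ∀ i N, s i < N → (H i j).coeff N = 0 := by
      intro i N hN
      rcases lt_trichotomy i j with hij | hij | hij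
      · rw [hHlow i j hij, Polynomial.coeff_zero]
      · subst hij
        exact coeff_eq_zero_of_natDegree_lt (by rw [← hs i]; omega)
      · refine coeff_eq_zero_of_degree_lt (lt_of_lt_of_le (hHdeg i j hij) ?_)
        calc (H i i).degree ≤ ((H i i).natDegree : WithBot ℕ) := degree_le_natDegree
          _ ≤ (N : WithBot ℕ) := by
              rw [Nat.cast_le (α := WithBot ℕ)]
              rw [← hs i]; omega
    obtain ⟨P, hPa, hPb, hPrec⟩ := decomp_exists dmax s r q hsumrq (fun i => H i j) hgj
    have hEP : E.mulVec P = fun a => H a j := by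
      funext a
      rw [E_mulVec_entry hE, hPrec a]
    -- bound on all coordinates of P
    have hPdmax : ∀ (c : (i : Fin n) × Fin (q i + 1)) (N : ℕ), dmax < N → (P c).coeff N = 0 := by
      rintro ⟨i, k⟩ N hN
      rcases Fin.eq_zero_or_eq_succ k with rfl | ⟨k', rfl⟩
      · exact hPa i N (by have := hrlt i; omega)
      · exact hPb i k' N hN
    -- the u-part
    set uu : Fin n → Polynomial K := (fun a => U a j) - Q.mulVec P with huu
    have hFuu : F.mulVec uu = R.mulVec P := by
      have h1 : F.mulVec (fun a => U a j) = fun a => H a j := by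
        funext a
        rw [mulVec_applyP, ← Matrix.mul_apply, hFU]
      have h2 : E.mulVec P = F.mulVec (Q.mulVec P) + R.mulVec P := by
        rw [hQR, Matrix.add_mulVec, Matrix.mulVec_mulVec]
      rw [huu, Matrix.mulVec_sub, h1, sub_eq_iff_eq_add']
      rw [hEP] at h2
      exact h2
    -- kernel membership and generation
    have hker0 : (fromCols F (-R)).mulVec (Sum.elim uu P) = 0 := by
      rw [fromCols_mulVec_sumElim, Matrix.neg_mulVec, hFuu, add_neg_cancel]
    obtain ⟨z, hz⟩ := hNgen _ hker0
    have hzd : Nd.mulVec z = P := by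
      funext b
      have hb := congrFun hz (Sum.inr b)
      rw [fromRows_mulVec] at hb
      simpa using hb
    -- degree bound on R *ᵥ P
    have hcRP : cdegS (fun _ : Fin n => (0 : ℤ)) (R.mulVec P)
        ≤ ((2 * (dmax : ℤ) - 1 : ℤ) : WithBot ℤ) := by
      rw [cdegS_le_iff]
      intro a
      rw [show ((0 : ℤ) : WithBot ℤ) = (0 : WithBot ℤ) from rfl, add_zero]
      refine degZ_le_int_of_coeff fun N hN => ?_
      rw [mulVec_applyP, Polynomial.finset_sum_coeff]
      refine Finset.sum_eq_zero fun c _ => ?_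
      by_cases hR0 : R a c = 0
      · rw [hR0, zero_mul, Polynomial.coeff_zero]
      · apply coeff_eq_zero_of_natDegree_lt
        have h1 : (R a c).natDegree < dmax := by
          rw [natDegree_lt_iff_degree_lt hR0]
          exact hRdeg a c
        have h2 : (P c).natDegree ≤ dmax := natDegree_le_iff_coeff_eq_zero.mpr (hPdmax c)
        have h3 := Polynomial.natDegree_mul_le (p := R a c) (q := P c)
        have hN' : 2 * dmax ≤ N := by omega
        omega
    -- degree bound on uu via PDP for F
    have huubd : ∀ i, degZ (uu i) + ((-(2 * (dmax : ℤ)) : ℤ) : WithBot ℤ) ≤ (0 : WithBot ℤ) := by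
      intro i
      by_cases h0 : uu i = 0
      · rw [h0, degZ_zero, WithBot.bot_add]
        exact bot_le
      · have hPDP := pdp hFdeg hFrank uu i h0
        rw [hFuu] at hPDP
        have h4 := le_trans hPDP hcRP
        rw [WithBot.coe_le_coe] at h4
        rw [degZ_eq_natDegree h0, ← WithBot.coe_add,
          show ((0 : WithBot ℤ)) = (((0 : ℤ)) : WithBot ℤ) from rfl, WithBot.coe_le_coe]
        have hd0 : (0 : ℤ) ≤ (d i : ℤ) := Int.natCast_nonneg _
        omega
    -- full shifted degree bound
    have hwdeg : cdegS (Sum.elim (fun _ : Fin n => -(2 * dmax : ℤ)) (fun c => -(sstar c)))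
        (Sum.elim uu P) ≤ (0 : WithBot ℤ) := by
      rw [cdegS_le_iff]
      rintro (i | c)
      · simpa using huubd i
      · simp only [Sum.elim_inr]
        obtain ⟨i, k⟩ := c
        rcases Fin.eq_zero_or_eq_succ k with rfl | ⟨k', rfl⟩
        · rw [hsstar ⟨i, 0⟩, if_pos rfl]
          exact shift_le_zero_iff.mpr (hPa i)
        · rw [hsstar ⟨i, k'.succ⟩, if_neg (Fin.succ_ne_zero k')]
          exact shift_le_zero_iff.mpr (hPb i k')
    -- minimality : z is supported on selected columns
    have hzsel : ∀ c, z c ≠ 0 → sel c := by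
      intro c hzc
      have h1 := pdp hvN hrkN z c hzc
      rw [hz] at h1
      have h2 := le_trans h1 hwdeg
      rw [show ((0 : WithBot ℤ)) = (((0 : ℤ)) : WithBot ℤ) from rfl, WithBot.coe_le_coe] at h2
      have hvc : vN c ≤ 0 := by
        have : (0 : ℤ) ≤ ((z c).natDegree : ℤ) := Int.natCast_nonneg _
        omega
      show cdegS (fun b => -(sstar b)) (fun b => Nd b c) ≤ (0 : WithBot ℤ)
      rw [cdegS_le_iff]
      intro b
      have h3 := le_cdegS (Sum.elim (fun _ : Fin n => -(2 * dmax : ℤ)) (fun c => -(sstar c)))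
        (fun x => (fromRows Nu Nd) x c) (Sum.inr b)
      rw [hvN c] at h3
      have h4 : degZ (Nd b c) + ((-(sstar b) : ℤ) : WithBot ℤ) ≤ ((vN c : ℤ) : WithBot ℤ) := by
        simpa [Matrix.fromRows_apply_inr] using h3
      exact le_trans h4 (by exact_mod_cast hvc)
    have hNbarz : Nbar.mulVec z = P := by
      rw [← hzd]
      funext b
      rw [mulVec_applyP, mulVec_applyP]
      refine Finset.sum_congr rfl fun c _ => ?_
      by_cases hzc : z c = 0
      · rw [hzc, mul_zero, mul_zero]
      · rw [hNbar b c, if_pos (hzsel c hzc)]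
    exact ⟨z, by rw [← Matrix.mulVec_mulVec, hNbarz, hEP]⟩
  choose zf hzf using hper
  have dir2 : ∀ v : Fin n → Polynomial K,
      (∃ p, H.mulVec p = v) → ∃ p, (E * Nbar).mulVec p = v := by
    rintro v ⟨w, rfl⟩
    refine ⟨fun c => ∑ j, w j * zf j c, ?_⟩
    funext a
    rw [mulVec_applyP]
    calc ∑ c, (E * Nbar) a c * ∑ j, w j * zf j c
        = ∑ c, ∑ j, w j * ((E * Nbar) a c * zf j c) := by
          refine Finset.sum_congr rfl fun c _ => ?_
          rw [Finset.mul_sum]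
          exact Finset.sum_congr rfl fun j _ => by ring
      _ = ∑ j, ∑ c, w j * ((E * Nbar) a c * zf j c) := Finset.sum_comm
      _ = ∑ j, w j * ((E * Nbar).mulVec (zf j)) a := by
          refine Finset.sum_congr rfl fun j _ => ?_
          rw [mulVec_applyP, Finset.mul_sum]
      _ = ∑ j, w j * H a j := by
          refine Finset.sum_congr rfl fun j _ => ?_
          rw [hzf j]
      _ = (H.mulVec w) a := by
          rw [mulVec_applyP]
          exact Finset.sum_congr rfl fun j _ => by ring
  refine ⟨⟨_root_.linearIndependent_cols_of_det_ne_zero hdetH,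
    fun v => ⟨fun h => dir1 v h, fun h => dir2 v h⟩⟩, ?_⟩
  -- second conclusion
  rintro c ⟨a, hac⟩
  have hselc : sel c := by
    by_contra hns
    apply hac
    rw [Matrix.mul_apply]
    exact Finset.sum_eq_zero fun b _ => by rw [hNbar b c, if_neg hns, mul_zero]
  have hcol : ∀ a' : Fin n, (E * Nbar) a' c = (E.mulVec (fun b => Nd b c)) a' := by
    intro a'
    rw [Matrix.mul_apply, mulVec_applyP]
    exact Finset.sum_congr rfl fun b _ => by rw [hNbar b c, if_pos hselc]
  obtain ⟨hsc0, hsck⟩ := hsel_coeff c hselc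
  have hub : cdegS (fun i : Fin n => -(s i : ℤ)) (fun a => (E * Nbar) a c) ≤ (0 : WithBot ℤ) := by
    rw [cdegS_le_iff]
    intro i
    rw [hcol i]
    exact shift_le_zero_iff.mpr fun N hN =>
      E_mulVec_coeff_bound hE hsumrq (fun b => Nd b c) hsc0 hsck i N hN
  have hlb : (0 : WithBot ℤ) ≤ cdegS (fun i : Fin n => -(s i : ℤ)) (fun a => (E * Nbar) a c) := by
    have hF' : H * U⁻¹ = F := by
      rw [← hFU]
      exact Matrix.mul_nonsing_inv_cancel_right _ _ hUdet
    have hcolH : (fun a => (E * Nbar) a c) = H.mulVec (U⁻¹.mulVec (fun b => Mbar b c)) := by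
      funext a'
      rw [Matrix.mulVec_mulVec, hF']
      have : (E * Nbar) a' c = (F * Mbar) a' c := by rw [hENbar]
      rw [this, Matrix.mul_apply, mulVec_applyP]
    rw [hcolH]
    refine cdeg_lower_of_hermite hHlow hHmon hs _ ?_
    rw [← hcolH]
    intro h0
    exact hac (congrFun h0 a)
  exact le_antisymm hub hlb
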